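/- arXiv:math/0307166 — 2 statements merged into one kernel-verified Lean document; each statement's English description precedes it below -/
import Mathlib

section
/- For every integer k ≥ 0, the set of minimal elements of {v ∈ Ṽ : ρ_k(v) > k + 4} is exactly {(1^{k+5}), (2, 1^{k+3}), (3, 2^{k+2}), (4, 3^{k+1}, 1), (6, 5^{k}, 2, 1)}; consequently every w ∈ Ṽ with ρ_k(w) > k+4 admits v < w with ρ_k(v) = k+4, i.e. ρ_k is (k+4)-separating. -/
set_option linter.unreachableTactic false
set_option linter.unusedTactic false


/-- The recurrent sequence `u₀ = 0`, `u₁ = 1`, `u_{n+2} = (k+2)·u_{n+1} − u_n`. -/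
noncomputable def useq (k : ℕ) : ℕ → ℝ
  | 0 => 0
  | 1 => 1
  | n + 2 => ((k : ℝ) + 2) * useq k (n + 1) - useq k n

/-- `ρ_k(0) = 0` and `ρ_k(n) = 1 + u_{n−1}/(u_n + 1)` for `n ≥ 1`
(for `k = 0` this is `ρ(n) = 1 + (n−1)/(n+1)`). -/
noncomputable def rhok (k : ℕ) (n : ℕ) : ℝ :=
  if n = 0 then 0 else 1 + useq k (n - 1) / (useq k n + 1)

/-- Membership in `Ṽ`: a nonincreasing, finitely supported sequence
of nonnegative integers. -/
def IsVt (v : ℕ → ℕ) : Prop :=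
  (∀ i j, i ≤ j → v j ≤ v i) ∧ ∃ s, ∀ i, s ≤ i → v i = 0

/-- The extension of `ρ_k` to `Ṽ`: `ρ_k(v) = Σ_i ρ_k(v_i)`, a finite sum since
`ρ_k(0) = 0` and `v` is finitely supported. -/
noncomputable def rhokV (k : ℕ) (v : ℕ → ℕ) : ℝ := ∑ᶠ i, rhok k (v i)

/-- The element of `Ṽ` whose entries are those of the list `l` (then zeros). -/
def ofList (l : List ℕ) : ℕ → ℕ := fun i => l.getD i 0

namespace Work
variable {k : ℕ}

lemma useq_zero : useq k 0 = 0 := rfl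
lemma useq_one : useq k 1 = 1 := rfl
lemma useq_add_two (n : ℕ) : useq k (n + 2) = ((k : ℝ) + 2) * useq k (n + 1) - useq k n := rfl

lemma useq_nonneg_mono : ∀ n, 0 ≤ useq k n ∧ useq k n ≤ useq k (n + 1) := by
  intro n
  induction n with
  | zero => simp [useq_zero, useq_one]
  | succ n ih =>
    obtain ⟨h0, h1⟩ := ih
    have hk : (0:ℝ) ≤ (k:ℝ) := Nat.cast_nonneg k
    constructor
    · linarith
    · rw [useq_add_two]; nlinarith

lemma useq_nonneg (n : ℕ) : 0 ≤ useq k n := (useq_nonneg_mono n).1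
lemma useq_le_succ (n : ℕ) : useq k n ≤ useq k (n + 1) := (useq_nonneg_mono n).2
lemma useq_one_le (n : ℕ) (hn : 1 ≤ n) : 1 ≤ useq k n := by
  induction n with
  | zero => omega
  | succ n ih =>
    rcases Nat.eq_zero_or_pos n with h | h
    · subst h; simp [useq_one]
    · exact le_trans (ih h) (useq_le_succ n)

lemma useq_invariant : ∀ n, useq k n ^ 2 + useq k (n+1) ^ 2 = ((k:ℝ)+2) * useq k n * useq k (n+1) + 1 := by
  intro n
  induction n with
  | zero => simp [useq_zero, useq_one]
  | succ n ih =>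
    rw [useq_add_two]
    nlinarith [ih]

/-- master bound: from coefficient conditions derive `c * u (n) ≤ e * (u (n+1) + 1)`. -/
lemma key_bound (c e : ℝ) (hc : 0 < c) (h1 : e^2 + c^2 ≤ ((k:ℝ)+2)*c*e)
    (h2 : 2*e^2 ≤ ((k:ℝ)+2)*c*e) (h3 : e ≤ c) (n : ℕ) :
    c * useq k n ≤ e * (useq k (n+1) + 1) := by
  set x : ℝ := (k:ℝ)+2 with hx
  have hk0 : (0:ℝ) ≤ (k:ℝ) := Nat.cast_nonneg k
  have hx2 : (2:ℝ) ≤ x := by rw [hx]; linarith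
  set y := useq k n
  set U := useq k (n+1)
  have inv : y^2 + U^2 = x*y*U + 1 := useq_invariant n
  have hyU : y ≤ U := useq_le_succ n
  have hy : 0 ≤ y := useq_nonneg n
  have hU : 0 ≤ U := useq_nonneg (n+1)
  have hxpos : (0:ℝ) < x := by linarith
  have he : 0 ≤ e := by
    by_contra hneg
    push_neg at hneg
    have : x*c*e < 0 := by
      have := mul_pos hxpos hc
      nlinarith
    nlinarith [sq_nonneg e]
  have key : (e*(U+1) - c*y) * (e*(U+1) + c*y - c*(x*U)) ≤ 0 := by nlinarith [sq_nonneg U]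
  by_contra hcon
  push_neg at hcon
  have h2y : 2*(c*y) ≤ c*(x*U) := by
    have hy2 : 2*y ≤ x*U := by nlinarith [mul_nonneg (sub_nonneg.mpr hx2) hU]
    nlinarith
  nlinarith


lemma useq_two : useq k 2 = (k:ℝ)+2 := by
  rw [show (2:ℕ) = 0+2 from rfl, useq_add_two]; simp [useq_zero, useq_one]

lemma useq_three : useq k 3 = ((k:ℝ)+2)^2 - 1 := by
  rw [show (3:ℕ) = 1+2 from rfl, useq_add_two]
  rw [show (1+1:ℕ) = 2 from rfl, useq_two, useq_one]; ring

lemma useq_four : useq k 4 = ((k:ℝ)+2)^3 - 2*((k:ℝ)+2) := by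
  rw [show (4:ℕ) = 2+2 from rfl, useq_add_two]
  rw [show (2+1:ℕ) = 3 from rfl, useq_three, useq_two]; ring

lemma useq_five : useq k 5 = ((k:ℝ)+2)^4 - 3*((k:ℝ)+2)^2 + 1 := by
  rw [show (5:ℕ) = 3+2 from rfl, useq_add_two]
  rw [show (3+1:ℕ) = 4 from rfl, useq_four, useq_three]; ring

lemma xpos : (0:ℝ) < (k:ℝ)+2 := by positivity
lemma x2le : (2:ℝ) ≤ (k:ℝ)+2 := by have : (0:ℝ) ≤ (k:ℝ) := Nat.cast_nonneg k; linarith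

lemma rhok_zero : rhok k 0 = 0 := by simp [rhok]

lemma rhok_succ (n : ℕ) : rhok k (n+1) = 1 + useq k n / (useq k (n+1) + 1) := by
  simp [rhok]

lemma useq_den_pos (n : ℕ) : (0:ℝ) < useq k n + 1 := by
  have := useq_nonneg (k := k) n; linarith

lemma rhok_one : rhok k 1 = 1 := by
  rw [show (1:ℕ) = 0+1 from rfl, rhok_succ, useq_zero]; simp

lemma rhok_two : rhok k 2 = 1 + 1/((k:ℝ)+3) := by
  rw [show rhok k 2 = rhok k (1+1) from rfl, rhok_succ, useq_one]
  rw [show (1+1:ℕ) = 2 from rfl, useq_two]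
  ring_nf

lemma rhok_three : rhok k 3 = 1 + 1/((k:ℝ)+2) := by
  rw [show (3:ℕ) = 2+1 from rfl, rhok_succ, useq_two]
  rw [show (2+1:ℕ) = 3 from rfl, useq_three]
  have hx := x2le (k := k)
  have h1 : ((k:ℝ)+2)^2 - 1 + 1 = ((k:ℝ)+2)^2 := by ring
  rw [h1]
  congr 1
  rw [div_eq_div_iff (by positivity) (by linarith)]
  ring

lemma rhok_four : rhok k 4 = 1 + ((k:ℝ)+3)/(((k:ℝ)+2)^2+((k:ℝ)+2)-1) := by
  rw [show (4:ℕ) = 3+1 from rfl, rhok_succ, useq_three]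
  rw [show (3+1:ℕ) = 4 from rfl, useq_four]
  have hx := x2le (k := k)
  congr 1
  rw [div_eq_div_iff (ne_of_gt (by nlinarith [sq_nonneg ((k:ℝ)+2), sq_nonneg (((k:ℝ)+2)^2-2)])) (ne_of_gt (by nlinarith [sq_nonneg ((k:ℝ)+2), sq_nonneg (((k:ℝ)+2)^2-2)]))]
  ring

lemma rhok_five : rhok k 5 = 1 + ((k:ℝ)+2)/(((k:ℝ)+2)^2-1) := by
  rw [show (5:ℕ) = 4+1 from rfl, rhok_succ, useq_four]
  rw [show (4+1:ℕ) = 5 from rfl, useq_five]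
  have hx := x2le (k := k)
  congr 1
  rw [div_eq_div_iff (ne_of_gt (by nlinarith [sq_nonneg ((k:ℝ)+2), sq_nonneg (((k:ℝ)+2)^2-2)])) (ne_of_gt (by nlinarith [sq_nonneg ((k:ℝ)+2), sq_nonneg (((k:ℝ)+2)^2-2)]))]
  ring

lemma rhok_nonneg (n : ℕ) : 0 ≤ rhok k n := by
  cases n with
  | zero => simp [rhok_zero]
  | succ m =>
    rw [rhok_succ]
    have := div_nonneg (useq_nonneg (k := k) m) (le_of_lt (useq_den_pos (k := k) (m+1)))
    linarith

lemma rhok_one_le (n : ℕ) (hn : 1 ≤ n) : 1 ≤ rhok k n := by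
  obtain ⟨m, rfl⟩ := Nat.exists_eq_add_of_le hn
  rw [show (1+m:ℕ) = m+1 from by omega, rhok_succ]
  have := div_nonneg (useq_nonneg (k := k) m) (le_of_lt (useq_den_pos (k := k) (m+1)))
  linarith

lemma useq_mul (n : ℕ) : useq k n * useq k (n+2) = useq k (n+1)^2 - 1 := by
  rw [useq_add_two]
  linear_combination (useq_invariant (k := k) n) * (-1)

lemma rhok_lt_succ (n : ℕ) : rhok k n < rhok k (n+1) := by
  cases n with
  | zero => rw [rhok_zero, rhok_one]; norm_num
  | succ m =>
    rw [rhok_succ, rhok_succ]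
    have d1 := useq_den_pos (k := k) (m+1)
    have d2 := useq_den_pos (k := k) (m+2)
    have key : useq k m * (useq k (m+1+1) + 1) < useq k (m+1) * (useq k (m+1) + 1) := by
      have hmul := useq_mul (k := k) m
      have h1 := useq_le_succ (k := k) m
      nlinarith
    have := (div_lt_div_iff₀ d1 d2).mpr key
    linarith

lemma rhok_strictMono : StrictMono (rhok k) := strictMono_nat_of_lt_succ rhok_lt_succ

lemma rhok_mono : Monotone (rhok k) := rhok_strictMono.monotone

lemma rhok_le_bound (c e : ℝ) (hc : 0 < c) (he : 0 ≤ e)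
    (h1 : e^2 + c^2 ≤ ((k:ℝ)+2)*c*e) (h2 : 2*e^2 ≤ ((k:ℝ)+2)*c*e) (h3 : e ≤ c)
    (n : ℕ) : rhok k n ≤ 1 + e/c := by
  cases n with
  | zero => rw [rhok_zero]; positivity
  | succ m =>
    rw [rhok_succ]
    have hkey := key_bound c e hc h1 h2 h3 m
    have d1 := useq_den_pos (k := k) (m+1)
    have : useq k m / (useq k (m+1) + 1) ≤ e / c := by
      rw [div_le_div_iff₀ d1 hc]; nlinarith
    linarith

/-- bound A : `ρ(n) ≤ 1 + 1/(k+1)` for all `n`. -/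
lemma rhok_le_A (n : ℕ) : rhok k n ≤ 1 + 1/((k:ℝ)+1) := by
  have hk : (0:ℝ) ≤ (k:ℝ) := Nat.cast_nonneg k
  exact rhok_le_bound ((k:ℝ)+1) 1 (by linarith) (by norm_num)
    (by nlinarith) (by nlinarith) (by linarith) n

/-- bound B : for `k ≥ 1`, `ρ(n) ≤ 1 + (k+1)/(k(k+3))`. -/
lemma rhok_le_B (hk : 1 ≤ k) (n : ℕ) : rhok k n ≤ 1 + ((k:ℝ)+1)/((k:ℝ)*((k:ℝ)+3)) := by
  have hk1 : (1:ℝ) ≤ (k:ℝ) := by exact_mod_cast hk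
  exact rhok_le_bound ((k:ℝ)*((k:ℝ)+3)) ((k:ℝ)+1) (by nlinarith) (by linarith)
    (by nlinarith) (by nlinarith) (by nlinarith) n

/-- bound C : for `k ≥ 1`,
`ρ(n) ≤ 1 + (kx(x²+x−1)+1)/(k(x²−1)(x²+x−1))` where `x = k+2`. -/
lemma rhok_le_C (hk : 1 ≤ k) (n : ℕ) :
    rhok k n ≤ 1 + ((k:ℝ)*((k:ℝ)+2)*((((k:ℝ)+2))^2+((k:ℝ)+2)-1)+1) /
      ((k:ℝ)*((((k:ℝ)+2))^2-1)*((((k:ℝ)+2))^2+((k:ℝ)+2)-1)) := by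
  have hk1 : (1:ℝ) ≤ (k:ℝ) := by exact_mod_cast hk
  have hK2 : (k:ℝ) ≤ (k:ℝ)^2 := by nlinarith
  have h3 : ((k:ℝ))^2 ≤ (k:ℝ)^3 := by nlinarith
  have h4 : ((k:ℝ))^3 ≤ (k:ℝ)^4 := by nlinarith
  have h5 : ((k:ℝ))^4 ≤ (k:ℝ)^5 := by nlinarith
  have h6 : ((k:ℝ))^5 ≤ (k:ℝ)^6 := by nlinarith
  have h7 : ((k:ℝ))^6 ≤ (k:ℝ)^7 := by nlinarith
  have h8 : ((k:ℝ))^7 ≤ (k:ℝ)^8 := by nlinarith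
  have h9 : ((k:ℝ))^8 ≤ (k:ℝ)^9 := by nlinarith
  have h10 : ((k:ℝ))^9 ≤ (k:ℝ)^10 := by nlinarith
  refine rhok_le_bound _ _ (by nlinarith) (by nlinarith) ?_ ?_ (by nlinarith) n
  · nlinarith [hk1, hK2, h3, h4, h5]
  · nlinarith [hk1, hK2, h3, h4, h5, h6, h7, h8, h9, h10]


lemma rhokV_eq_sum (w : ℕ → ℕ) (n : ℕ) (h : ∀ i, n ≤ i → w i = 0) :
    rhokV k w = ∑ i ∈ Finset.range n, rhok k (w i) := by
  refine finsum_eq_sum_of_support_subset _ ?_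
  intro i hi
  simp only [Function.mem_support] at hi
  simp only [Finset.coe_range, Set.mem_Iio]
  by_contra h'
  push_neg at h'
  exact hi (by rw [h i h', rhok_zero])

lemma ofList_replicate (n a i : ℕ) : ofList (List.replicate n a) i = if i < n then a else 0 := by
  unfold ofList
  rcases lt_or_ge i n with h | h
  · rw [List.getD_eq_getElem _ _ (by simpa using h)]
    simp [h]
  · rw [List.getD_eq_default _ _ (by simpa using h)]
    simp [Nat.not_lt.mpr h]

lemma ofList_cons_zero (a : ℕ) (l : List ℕ) : ofList (a :: l) 0 = a := rfl

lemma ofList_cons_succ (a : ℕ) (l : List ℕ) (i : ℕ) : ofList (a :: l) (i+1) = ofList l i := rfl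

lemma ofList_append (l₁ l₂ : List ℕ) (i : ℕ) :
    ofList (l₁ ++ l₂) i = if i < l₁.length then ofList l₁ i else ofList l₂ (i - l₁.length) := by
  unfold ofList
  rcases lt_or_ge i l₁.length with h | h
  · rw [List.getD_append _ _ _ _ h]; simp [h]
  · rw [List.getD_append_right _ _ _ _ h]; simp [Nat.not_lt.mpr h]

lemma ofList_pair (a b i : ℕ) :
    ofList [a, b] i = if i = 0 then a else if i = 1 then b else 0 := by
  match i with
  | 0 => rfl
  | 1 => rfl
  | (n+2) =>
    unfold ofList
    rw [List.getD_eq_default _ _ (by simp)]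
    simp

lemma ofList_single (a i : ℕ) : ofList [a] i = if i = 0 then a else 0 := by
  match i with
  | 0 => rfl
  | (n+1) =>
    unfold ofList
    rw [List.getD_eq_default _ _ (by simp)]
    simp

lemma eval_L1 (i : ℕ) : ofList (List.replicate (k+5) 1) i = if i < k+5 then 1 else 0 :=
  ofList_replicate _ _ _

lemma eval_L2 (i : ℕ) : ofList (2 :: List.replicate (k+3) 1) i =
    if i = 0 then 2 else if i < k+4 then 1 else 0 := by
  match i with
  | 0 => rfl
  | (j+1) =>
    rw [ofList_cons_succ, ofList_replicate, if_neg (j.succ_ne_zero)]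
    split_ifs <;> first | omega | tauto

lemma eval_L3 (i : ℕ) : ofList (3 :: List.replicate (k+2) 2) i =
    if i = 0 then 3 else if i < k+3 then 2 else 0 := by
  match i with
  | 0 => rfl
  | (j+1) =>
    rw [ofList_cons_succ, ofList_replicate, if_neg (j.succ_ne_zero)]
    split_ifs <;> first | omega | tauto

lemma eval_L4 (i : ℕ) : ofList (4 :: (List.replicate (k+1) 3 ++ [1])) i =
    if i = 0 then 4 else if i < k+2 then 3 else if i = k+2 then 1 else 0 := by
  match i with
  | 0 => rfl
  | (j+1) =>
    rw [ofList_cons_succ, ofList_append, ofList_replicate, ofList_single, if_neg (j.succ_ne_zero)]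
    simp only [List.length_replicate]
    split_ifs <;> first | omega | tauto

lemma eval_L5 (i : ℕ) : ofList (6 :: (List.replicate k 5 ++ [2, 1])) i =
    if i = 0 then 6 else if i < k+1 then 5 else if i = k+1 then 2 else if i = k+2 then 1 else 0 := by
  match i with
  | 0 => rfl
  | (j+1) =>
    rw [ofList_cons_succ, ofList_append, ofList_replicate, ofList_pair, if_neg (j.succ_ne_zero)]
    simp only [List.length_replicate]
    split_ifs <;> first | omega | tauto

lemma eval_V1 (i : ℕ) : ofList (List.replicate (k+4) 1) i = if i < k+4 then 1 else 0 :=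
  ofList_replicate _ _ _

lemma eval_V2 (i : ℕ) : ofList (List.replicate (k+3) 2) i = if i < k+3 then 2 else 0 :=
  ofList_replicate _ _ _

lemma eval_V4 (i : ℕ) : ofList (List.replicate (k+2) 3 ++ [1]) i =
    if i < k+2 then 3 else if i = k+2 then 1 else 0 := by
  rw [ofList_append, ofList_replicate, ofList_single]
  simp only [List.length_replicate]
  split_ifs <;> first | omega | tauto

lemma eval_V5 (i : ℕ) : ofList (List.replicate (k+1) 5 ++ [2, 1]) i =
    if i < k+1 then 5 else if i = k+1 then 2 else if i = k+2 then 1 else 0 := by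
  rw [ofList_append, ofList_replicate, ofList_pair]
  simp only [List.length_replicate]
  split_ifs <;> first | omega | tauto


lemma isVt_L1 : IsVt (ofList (List.replicate (k+5) 1)) := by
  constructor
  · intro i j hij
    rw [eval_L1, eval_L1]
    split_ifs <;> first | omega | tauto
  · exact ⟨k+5, fun i hi => by rw [eval_L1]; split_ifs <;> first | omega | tauto⟩

lemma supp_L1 : ∀ i, k+5 ≤ i → ofList (List.replicate (k+5) 1) i = 0 :=
  fun i hi => by rw [eval_L1]; split_ifs <;> first | omega | tauto

lemma isVt_L2 : IsVt (ofList (2 :: List.replicate (k+3) 1)) := by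
  constructor
  · intro i j hij
    rw [eval_L2, eval_L2]
    split_ifs <;> first | omega | tauto
  · exact ⟨k+4, fun i hi => by rw [eval_L2]; split_ifs <;> first | omega | tauto⟩

lemma supp_L2 : ∀ i, k+4 ≤ i → ofList (2 :: List.replicate (k+3) 1) i = 0 :=
  fun i hi => by rw [eval_L2]; split_ifs <;> first | omega | tauto

lemma isVt_L3 : IsVt (ofList (3 :: List.replicate (k+2) 2)) := by
  constructor
  · intro i j hij
    rw [eval_L3, eval_L3]
    split_ifs <;> first | omega | tauto
  · exact ⟨k+3, fun i hi => by rw [eval_L3]; split_ifs <;> first | omega | tauto⟩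

lemma supp_L3 : ∀ i, k+3 ≤ i → ofList (3 :: List.replicate (k+2) 2) i = 0 :=
  fun i hi => by rw [eval_L3]; split_ifs <;> first | omega | tauto

lemma isVt_L4 : IsVt (ofList (4 :: (List.replicate (k+1) 3 ++ [1]))) := by
  constructor
  · intro i j hij
    rw [eval_L4, eval_L4]
    split_ifs <;> first | omega | tauto
  · exact ⟨k+3, fun i hi => by rw [eval_L4]; split_ifs <;> first | omega | tauto⟩

lemma supp_L4 : ∀ i, k+3 ≤ i → ofList (4 :: (List.replicate (k+1) 3 ++ [1])) i = 0 :=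
  fun i hi => by rw [eval_L4]; split_ifs <;> first | omega | tauto

lemma isVt_L5 : IsVt (ofList (6 :: (List.replicate k 5 ++ [2, 1]))) := by
  constructor
  · intro i j hij
    rw [eval_L5, eval_L5]
    split_ifs <;> first | omega | tauto
  · exact ⟨k+3, fun i hi => by rw [eval_L5]; split_ifs <;> first | omega | tauto⟩

lemma supp_L5 : ∀ i, k+3 ≤ i → ofList (6 :: (List.replicate k 5 ++ [2, 1])) i = 0 :=
  fun i hi => by rw [eval_L5]; split_ifs <;> first | omega | tauto

lemma isVt_V1 : IsVt (ofList (List.replicate (k+4) 1)) := by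
  constructor
  · intro i j hij
    rw [eval_V1, eval_V1]
    split_ifs <;> first | omega | tauto
  · exact ⟨k+4, fun i hi => by rw [eval_V1]; split_ifs <;> first | omega | tauto⟩

lemma supp_V1 : ∀ i, k+4 ≤ i → ofList (List.replicate (k+4) 1) i = 0 :=
  fun i hi => by rw [eval_V1]; split_ifs <;> first | omega | tauto

lemma isVt_V2 : IsVt (ofList (List.replicate (k+3) 2)) := by
  constructor
  · intro i j hij
    rw [eval_V2, eval_V2]
    split_ifs <;> first | omega | tauto
  · exact ⟨k+3, fun i hi => by rw [eval_V2]; split_ifs <;> first | omega | tauto⟩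

lemma supp_V2 : ∀ i, k+3 ≤ i → ofList (List.replicate (k+3) 2) i = 0 :=
  fun i hi => by rw [eval_V2]; split_ifs <;> first | omega | tauto

lemma isVt_V4 : IsVt (ofList (List.replicate (k+2) 3 ++ [1])) := by
  constructor
  · intro i j hij
    rw [eval_V4, eval_V4]
    split_ifs <;> first | omega | tauto
  · exact ⟨k+3, fun i hi => by rw [eval_V4]; split_ifs <;> first | omega | tauto⟩

lemma supp_V4 : ∀ i, k+3 ≤ i → ofList (List.replicate (k+2) 3 ++ [1]) i = 0 :=
  fun i hi => by rw [eval_V4]; split_ifs <;> first | omega | tauto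

lemma isVt_V5 : IsVt (ofList (List.replicate (k+1) 5 ++ [2, 1])) := by
  constructor
  · intro i j hij
    rw [eval_V5, eval_V5]
    split_ifs <;> first | omega | tauto
  · exact ⟨k+3, fun i hi => by rw [eval_V5]; split_ifs <;> first | omega | tauto⟩

lemma supp_V5 : ∀ i, k+3 ≤ i → ofList (List.replicate (k+1) 5 ++ [2, 1]) i = 0 :=
  fun i hi => by rw [eval_V5]; split_ifs <;> first | omega | tauto

lemma cast_ne3 : ((k:ℝ)+3) ≠ 0 := by positivity
lemma cast_ne2 : ((k:ℝ)+2) ≠ 0 := by positivity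
lemma cast_neQ : (((k:ℝ)+2)^2+((k:ℝ)+2)-1) ≠ 0 := by nlinarith [x2le (k := k)]
lemma cast_neS : (((k:ℝ)+2)^2-1) ≠ 0 := by nlinarith [x2le (k := k)]

lemma rhokV_L1 : rhokV k (ofList (List.replicate (k+5) 1)) = (k:ℝ)+5 := by
  rw [rhokV_eq_sum _ (k+5) supp_L1]
  rw [Finset.sum_congr rfl (fun i hi => by
    rw [eval_L1, if_pos (Finset.mem_range.mp hi), rhok_one])]
  rw [Finset.sum_const, Finset.card_range, nsmul_eq_mul]
  push_cast; ring

lemma rhokV_V1 : rhokV k (ofList (List.replicate (k+4) 1)) = (k:ℝ)+4 := by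
  rw [rhokV_eq_sum _ (k+4) supp_V1]
  rw [Finset.sum_congr rfl (fun i hi => by
    rw [eval_V1, if_pos (Finset.mem_range.mp hi), rhok_one])]
  rw [Finset.sum_const, Finset.card_range, nsmul_eq_mul]
  push_cast; ring

lemma rhokV_V2 : rhokV k (ofList (List.replicate (k+3) 2)) = (k:ℝ)+4 := by
  rw [rhokV_eq_sum _ (k+3) supp_V2]
  rw [Finset.sum_congr rfl (fun i hi => by
    rw [eval_V2, if_pos (Finset.mem_range.mp hi), rhok_two])]
  rw [Finset.sum_const, Finset.card_range, nsmul_eq_mul]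
  have := cast_ne3 (k := k)
  push_cast
  field_simp
  ring

lemma rhokV_V4 : rhokV k (ofList (List.replicate (k+2) 3 ++ [1])) = (k:ℝ)+4 := by
  rw [rhokV_eq_sum _ (k+3) supp_V4, Finset.sum_range_succ]
  have e1 : ofList (List.replicate (k+2) 3 ++ [1]) (k+2) = 1 := by
    rw [eval_V4]; split_ifs <;> first | omega | tauto
  rw [e1, rhok_one]
  rw [Finset.sum_congr rfl (fun i hi => by
    rw [eval_V4, if_pos (Finset.mem_range.mp hi), rhok_three])]
  rw [Finset.sum_const, Finset.card_range, nsmul_eq_mul]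
  have := cast_ne2 (k := k)
  push_cast
  field_simp
  ring

lemma rhokV_V5 : rhokV k (ofList (List.replicate (k+1) 5 ++ [2, 1])) = (k:ℝ)+4 := by
  rw [rhokV_eq_sum _ (k+3) supp_V5, Finset.sum_range_succ, Finset.sum_range_succ]
  have e1 : ofList (List.replicate (k+1) 5 ++ [2, 1]) (k+2) = 1 := by
    rw [eval_V5]; split_ifs <;> first | omega | tauto
  have e2 : ofList (List.replicate (k+1) 5 ++ [2, 1]) (k+1) = 2 := by
    rw [eval_V5]; split_ifs <;> first | omega | tauto
  rw [e1, e2, rhok_one, rhok_two]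
  rw [Finset.sum_congr rfl (fun i hi => by
    rw [eval_V5, if_pos (Finset.mem_range.mp hi), rhok_five])]
  rw [Finset.sum_const, Finset.card_range, nsmul_eq_mul]
  have h3 := cast_ne3 (k := k)
  have hS := cast_neS (k := k)
  push_cast
  field_simp
  ring

lemma rhokV_L2 : rhokV k (ofList (2 :: List.replicate (k+3) 1)) = (k:ℝ)+4 + 1/((k:ℝ)+3) := by
  rw [rhokV_eq_sum _ (k+4) supp_L2]
  rw [show k+4 = (k+3)+1 from rfl, Finset.sum_range_succ']
  have e0 : ofList (2 :: List.replicate (k+3) 1) 0 = 2 := rfl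
  rw [e0, rhok_two]
  rw [Finset.sum_congr rfl (fun i hi => by
    have hi' := Finset.mem_range.mp hi
    rw [eval_L2, if_neg (i.succ_ne_zero), if_pos (by omega), rhok_one])]
  rw [Finset.sum_const, Finset.card_range, nsmul_eq_mul]
  push_cast; ring

lemma rhokV_L3 : rhokV k (ofList (3 :: List.replicate (k+2) 2)) =
    (k:ℝ)+4 + 1/(((k:ℝ)+2)*((k:ℝ)+3)) := by
  rw [rhokV_eq_sum _ (k+3) supp_L3]
  rw [show k+3 = (k+2)+1 from rfl, Finset.sum_range_succ']
  have e0 : ofList (3 :: List.replicate (k+2) 2) 0 = 3 := rfl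
  rw [e0, rhok_three]
  rw [Finset.sum_congr rfl (fun i hi => by
    have hi' := Finset.mem_range.mp hi
    rw [eval_L3, if_neg (i.succ_ne_zero), if_pos (by omega), rhok_two])]
  rw [Finset.sum_const, Finset.card_range, nsmul_eq_mul]
  have h3 := cast_ne3 (k := k)
  have h2 := cast_ne2 (k := k)
  push_cast
  field_simp
  ring

lemma rhokV_L4 : rhokV k (ofList (4 :: (List.replicate (k+1) 3 ++ [1]))) =
    (k:ℝ)+4 + 1/(((k:ℝ)+2)*(((k:ℝ)+2)^2+((k:ℝ)+2)-1)) := by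
  rw [rhokV_eq_sum _ (k+3) supp_L4, Finset.sum_range_succ]
  have e1 : ofList (4 :: (List.replicate (k+1) 3 ++ [1])) (k+2) = 1 := by
    rw [eval_L4]; split_ifs <;> first | omega | tauto
  rw [e1, rhok_one]
  rw [show k+2 = (k+1)+1 from rfl, Finset.sum_range_succ']
  have e0 : ofList (4 :: (List.replicate (k+1) 3 ++ [1])) 0 = 4 := rfl
  rw [e0, rhok_four]
  rw [Finset.sum_congr rfl (fun i hi => by
    have hi' := Finset.mem_range.mp hi
    rw [eval_L4, if_neg (i.succ_ne_zero), if_pos (by omega), rhok_three])]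
  rw [Finset.sum_const, Finset.card_range, nsmul_eq_mul]
  have h2 := cast_ne2 (k := k)
  have hQ := cast_neQ (k := k)
  push_cast
  generalize hQv : ((k:ℝ)+2)^2+((k:ℝ)+2)-1 = Q at *
  field_simp
  subst hQv
  ring

lemma rhokV_L5 : rhokV k (ofList (6 :: (List.replicate k 5 ++ [2, 1]))) > (k:ℝ)+4 := by
  have hV5 := rhokV_V5 (k := k)
  rw [rhokV_eq_sum _ (k+3) supp_L5, Finset.sum_range_succ, Finset.sum_range_succ]
  rw [rhokV_eq_sum _ (k+3) supp_V5, Finset.sum_range_succ, Finset.sum_range_succ] at hV5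
  have e1 : ofList (6 :: (List.replicate k 5 ++ [2, 1])) (k+2) = 1 := by
    rw [eval_L5]; split_ifs <;> first | omega | tauto
  have e2 : ofList (6 :: (List.replicate k 5 ++ [2, 1])) (k+1) = 2 := by
    rw [eval_L5]; split_ifs <;> first | omega | tauto
  have f1 : ofList (List.replicate (k+1) 5 ++ [2, 1]) (k+2) = 1 := by
    rw [eval_V5]; split_ifs <;> first | omega | tauto
  have f2 : ofList (List.replicate (k+1) 5 ++ [2, 1]) (k+1) = 2 := by
    rw [eval_V5]; split_ifs <;> first | omega | tauto
  rw [e1, e2] at *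
  rw [f1, f2] at hV5
  have hsum5 : ∑ i ∈ Finset.range (k+1), rhok k (ofList (List.replicate (k+1) 5 ++ [2, 1]) i)
      = (k+1) • rhok k 5 := by
    rw [Finset.sum_congr rfl (fun i hi => by
      rw [eval_V5, if_pos (Finset.mem_range.mp hi)])]
    rw [Finset.sum_const, Finset.card_range]
  have hsumL : ∑ i ∈ Finset.range (k+1), rhok k (ofList (6 :: (List.replicate k 5 ++ [2, 1])) i)
      = rhok k 6 + k • rhok k 5 := by
    rw [show k+1 = k+0+1 from rfl, Finset.sum_range_succ']
    have e0 : ofList (6 :: (List.replicate k 5 ++ [2, 1])) 0 = 6 := rfl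
    rw [e0]
    rw [Finset.sum_congr rfl (fun i hi => by
      have hi' := Finset.mem_range.mp hi
      rw [eval_L5, if_neg (i.succ_ne_zero), if_pos (by omega)])]
    rw [Finset.sum_const, Finset.card_range]
    ring
  rw [hsumL]
  rw [hsum5] at hV5
  have h56 : rhok k 5 < rhok k 6 := rhok_lt_succ 5
  have hexp : ((k+1) • rhok k 5 : ℝ) = k • rhok k 5 + rhok k 5 := by
    rw [succ_nsmul]
  rw [hexp] at hV5
  linarith


lemma rhok_le_one {n : ℕ} (h : n ≤ 1) : rhok k n ≤ 1 := by
  match n, h with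
  | 0, _ => rw [rhok_zero]; norm_num
  | 1, _ => rw [rhok_one]

lemma supp_of {w : ℕ → ℕ} (hmono : ∀ i j, i ≤ j → w j ≤ w i) {m : ℕ} (hz : w m = 0) :
    ∀ i, m ≤ i → w i = 0 := fun i hi => Nat.le_zero.mp (hz ▸ hmono m i hi)

lemma numA : ((k:ℝ)+2) * (1 + 1/((k:ℝ)+1)) ≤ (k:ℝ)+4 := by
  have hk : (0:ℝ) ≤ (k:ℝ) := Nat.cast_nonneg k
  have h1 : ((k:ℝ)+1) ≠ 0 := by positivity
  have h2 : ((k:ℝ)+2)/((k:ℝ)+1) ≤ 2 := by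
    rw [div_le_iff₀ (by positivity : (0:ℝ) < (k:ℝ)+1)]; linarith
  have h3 : ((k:ℝ)+2) * (1 + 1/((k:ℝ)+1)) = ((k:ℝ)+2) + ((k:ℝ)+2)/((k:ℝ)+1) := by ring
  linarith [h2, h3]

lemma numD1 : ((k:ℝ)+1) * (1 + 1/((k:ℝ)+1)) + 1 + 1 = (k:ℝ)+4 := by
  have h1 : ((k:ℝ)+1) ≠ 0 := by positivity
  field_simp; ring

lemma numV2 : ((k:ℝ)+3) * (1 + 1/((k:ℝ)+3)) = (k:ℝ)+4 := by
  have h1 := cast_ne3 (k := k)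
  field_simp; ring

lemma numV4 : ((k:ℝ)+2) * (1 + 1/((k:ℝ)+2)) + 1 = (k:ℝ)+4 := by
  have h1 := cast_ne2 (k := k)
  field_simp; ring

lemma numF1 (hk : 1 ≤ k) :
    (k:ℝ) * (1 + ((k:ℝ)+1)/((k:ℝ)*((k:ℝ)+3))) + 2 * (1 + 1/((k:ℝ)+3)) + 1 = (k:ℝ)+4 := by
  have hk1 : (1:ℝ) ≤ (k:ℝ) := by exact_mod_cast hk
  have h0 : ((k:ℝ)) ≠ 0 := by positivity
  have h3 := cast_ne3 (k := k)
  field_simp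
  ring

lemma numH1 : ((k:ℝ)+1) * (1 + ((k:ℝ)+2)/(((k:ℝ)+2)^2-1)) + (1 + 1/((k:ℝ)+3)) + 1 = (k:ℝ)+4 := by
  have hS := cast_neS (k := k)
  have h3 := cast_ne3 (k := k)
  field_simp
  ring

lemma numI (hk : 1 ≤ k) :
    (k:ℝ) * (1 + ((k:ℝ)*((k:ℝ)+2)*((((k:ℝ)+2))^2+((k:ℝ)+2)-1)+1) /
      ((k:ℝ)*((((k:ℝ)+2))^2-1)*((((k:ℝ)+2))^2+((k:ℝ)+2)-1)))
    + (1 + ((k:ℝ)+3)/(((k:ℝ)+2)^2+((k:ℝ)+2)-1)) + (1 + 1/((k:ℝ)+3)) + 1 = (k:ℝ)+4 := by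
  have hk1 : (1:ℝ) ≤ (k:ℝ) := by exact_mod_cast hk
  have h0 : ((k:ℝ)) ≠ 0 := by positivity
  have h3 := cast_ne3 (k := k)
  have hS := cast_neS (k := k)
  have hQ := cast_neQ (k := k)
  generalize hQv : ((k:ℝ)+2)^2+((k:ℝ)+2)-1 = Q at *
  field_simp
  subst hQv
  ring


lemma domination (w : ℕ → ℕ) (hmono : ∀ i j, i ≤ j → w j ≤ w i)
    (hρ : rhokV k w > (k:ℝ)+4) :
    (∀ i, ofList (List.replicate (k+5) 1) i ≤ w i) ∨
    (∀ i, ofList (2 :: List.replicate (k+3) 1) i ≤ w i) ∨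
    (∀ i, ofList (3 :: List.replicate (k+2) 2) i ≤ w i) ∨
    (∀ i, ofList (4 :: (List.replicate (k+1) 3 ++ [1])) i ≤ w i) ∨
    (∀ i, ofList (6 :: (List.replicate k 5 ++ [2, 1])) i ≤ w i) := by
  by_contra hcon
  push_neg at hcon
  obtain ⟨h1, h2, h3, h4, h5⟩ := hcon
  obtain ⟨i1, hi1⟩ := h1
  rw [eval_L1] at hi1
  have hz : w (k+4) = 0 := by
    by_cases h : i1 < k+5
    · rw [if_pos h] at hi1
      have hm := hmono i1 (k+4) (by omega)
      omega
    · rw [if_neg h] at hi1; omega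
  -- Step B : w (k+2) ≥ 1
  have hwk2 : 1 ≤ w (k+2) := by
    by_contra hB
    push_neg at hB
    have hz2 : w (k+2) = 0 := by omega
    rw [rhokV_eq_sum w (k+2) (supp_of hmono hz2)] at hρ
    have hb := Finset.sum_le_card_nsmul (Finset.range (k+2)) (fun i => rhok k (w i))
      (1 + 1/((k:ℝ)+1)) (fun i _ => rhok_le_A (w i))
    rw [Finset.card_range, nsmul_eq_mul] at hb
    push_cast at hb
    have hA := numA (k := k)
    linarith
  by_cases hwk3 : 1 ≤ w (k+3)
  · -- C1 : length k+4 ⟹ w 0 ≥ 2, contradiction with ¬dom L2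
    obtain ⟨i2, hi2⟩ := h2
    rw [eval_L2] at hi2
    by_cases h0 : i2 = 0
    · subst h0
      rw [if_pos rfl] at hi2
      rw [rhokV_eq_sum w (k+4) (supp_of hmono hz)] at hρ
      have hb := Finset.sum_le_card_nsmul (Finset.range (k+4)) (fun i => rhok k (w i))
        1 (fun i _ => rhok_le_one (by have := hmono 0 i (Nat.zero_le i); omega))
      rw [Finset.card_range, nsmul_eq_mul, mul_one] at hb
      push_cast at hb
      linarith
    · rw [if_neg h0] at hi2
      by_cases hlt : i2 < k+4
      · rw [if_pos hlt] at hi2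
        have := hmono i2 (k+3) (by omega)
        omega
      · rw [if_neg hlt] at hi2; omega
  · have hz3 : w (k+3) = 0 := by omega
    rw [rhokV_eq_sum w (k+3) (supp_of hmono hz3)] at hρ
    by_cases hwk1 : 2 ≤ w (k+1)
    · by_cases hwk2b : 2 ≤ w (k+2)
      · -- E1 : all of w 0 .. w (k+2) ≥ 2 ⟹ w 0 ≥ 3, contra ¬dom L3
        obtain ⟨i3, hi3⟩ := h3
        rw [eval_L3] at hi3
        by_cases h0 : i3 = 0
        · subst h0
          rw [if_pos rfl] at hi3
          have hcongr : ∀ i ∈ Finset.range (k+3), rhok k (w i) = rhok k 2 := by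
            intro i hi
            have hi' := Finset.mem_range.mp hi
            have ha := hmono i (k+2) (by omega)
            have hb := hmono 0 i (Nat.zero_le i)
            congr 1
            omega
          rw [Finset.sum_congr rfl hcongr, Finset.sum_const, Finset.card_range,
            nsmul_eq_mul, rhok_two] at hρ
          push_cast at hρ
          have := numV2 (k := k)
          linarith
        · rw [if_neg h0] at hi3
          by_cases hlt : i3 < k+3
          · rw [if_pos hlt] at hi3
            have := hmono i3 (k+2) (by omega)
            omega
          · rw [if_neg hlt] at hi3; omega
      · have hwk2e : w (k+2) = 1 := by omega
        by_cases hwk0 : 3 ≤ w k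
        · by_cases hwk1b : 3 ≤ w (k+1)
          · -- G1 : w 0 .. w (k+1) ≥ 3 ⟹ w 0 ≥ 4, contra ¬dom L4
            obtain ⟨i4, hi4⟩ := h4
            rw [eval_L4] at hi4
            by_cases h0 : i4 = 0
            · subst h0
              rw [if_pos rfl] at hi4
              rw [Finset.sum_range_succ] at hρ
              have hcongr : ∀ i ∈ Finset.range (k+2), rhok k (w i) = rhok k 3 := by
                intro i hi
                have hi' := Finset.mem_range.mp hi
                have ha := hmono i (k+1) (by omega)
                have hb := hmono 0 i (Nat.zero_le i)
                congr 1
                omega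
              rw [Finset.sum_congr rfl hcongr, Finset.sum_const, Finset.card_range,
                nsmul_eq_mul, rhok_three, hwk2e, rhok_one] at hρ
              push_cast at hρ
              have := numV4 (k := k)
              linarith
            · rw [if_neg h0] at hi4
              by_cases hlt : i4 < k+2
              · rw [if_pos hlt] at hi4
                have := hmono i4 (k+1) (by omega)
                omega
              · rw [if_neg hlt] at hi4
                by_cases heq : i4 = k+2
                · rw [if_pos heq] at hi4; subst heq; omega
                · rw [if_neg heq] at hi4; omega
          · have hwk1e : w (k+1) = 2 := by omega
            rw [Finset.sum_range_succ, Finset.sum_range_succ, hwk2e, hwk1e,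
              rhok_one, rhok_two] at hρ
            by_cases hw0 : 6 ≤ w 0
            · -- step I : some w j ≤ 4 with 1 ≤ j ≤ k, contra ¬dom L5
              obtain ⟨i5, hi5⟩ := h5
              rw [eval_L5] at hi5
              by_cases h0 : i5 = 0
              · subst h0; rw [if_pos rfl] at hi5; omega
              · rw [if_neg h0] at hi5
                by_cases hlt : i5 < k+1
                · rw [if_pos hlt] at hi5
                  -- j := i5, 1 ≤ i5 ≤ k, w i5 ≤ 4, w i5 ≥ 3
                  have hk1 : 1 ≤ k := by omega
                  have hjmem : i5 ∈ Finset.range (k+1) := Finset.mem_range.mpr hlt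
                  have hsplit := (Finset.sum_erase_add (Finset.range (k+1))
                    (fun i => rhok k (w i)) hjmem).symm
                  rw [hsplit] at hρ
                  have hb := Finset.sum_le_card_nsmul ((Finset.range (k+1)).erase i5)
                    (fun i => rhok k (w i))
                    (1 + ((k:ℝ)*((k:ℝ)+2)*((((k:ℝ)+2))^2+((k:ℝ)+2)-1)+1) /
                      ((k:ℝ)*((((k:ℝ)+2))^2-1)*((((k:ℝ)+2))^2+((k:ℝ)+2)-1)))
                    (fun i _ => rhok_le_C hk1 (w i))
                  rw [Finset.card_erase_of_mem hjmem, Finset.card_range] at hb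
                  have hcard : (k+1-1 : ℕ) = k := by omega
                  rw [hcard, nsmul_eq_mul] at hb
                  have hj4 : rhok k (w i5) ≤ rhok k 4 := rhok_mono (by omega)
                  rw [rhok_four] at hj4
                  have hnum := numI (k := k) hk1
                  linarith
                · rw [if_neg hlt] at hi5
                  by_cases he1 : i5 = k+1
                  · rw [if_pos he1] at hi5; subst he1; omega
                  · rw [if_neg he1] at hi5
                    by_cases he2 : i5 = k+2
                    · rw [if_pos he2] at hi5; subst he2; omega
                    · rw [if_neg he2] at hi5; omega
            · -- H1 : all entries ≤ 5
              have hb := Finset.sum_le_card_nsmul (Finset.range (k+1))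
                (fun i => rhok k (w i)) (rhok k 5)
                (fun i _ => rhok_mono (by have := hmono 0 i (Nat.zero_le i); omega))
              rw [Finset.card_range, nsmul_eq_mul, rhok_five] at hb
              push_cast at hb
              have := numH1 (k := k)
              linarith
        · -- F1 : w k ≤ 2
          have hwke : w k = 2 := by
            have := hmono k (k+1) (by omega)
            omega
          rw [show k+3 = (k+1)+1+1 from rfl, Finset.sum_range_succ, Finset.sum_range_succ,
            Finset.sum_range_succ, hwk2e, rhok_one] at hρ
          have hwk1e : w (k+1) = 2 := by
            have := hmono k (k+1) (by omega)
            omega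
          rw [hwk1e, hwke, rhok_two] at hρ
          by_cases hk0 : k = 0
          · subst hk0
            rw [Finset.range_zero, Finset.sum_empty] at hρ
            push_cast at hρ
            norm_num at hρ
          · have hk1 : 1 ≤ k := by omega
            have hb := Finset.sum_le_card_nsmul (Finset.range k)
              (fun i => rhok k (w i)) (1 + ((k:ℝ)+1)/((k:ℝ)*((k:ℝ)+3)))
              (fun i _ => rhok_le_B hk1 (w i))
            rw [Finset.card_range, nsmul_eq_mul] at hb
            have := numF1 (k := k) hk1
            linarith
    · -- D1 : w (k+1) ≤ 1
      rw [Finset.sum_range_succ, Finset.sum_range_succ] at hρ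
      have hb := Finset.sum_le_card_nsmul (Finset.range (k+1)) (fun i => rhok k (w i))
        (1 + 1/((k:ℝ)+1)) (fun i _ => rhok_le_A (w i))
      rw [Finset.card_range, nsmul_eq_mul] at hb
      have e1 : rhok k (w (k+1)) ≤ 1 := rhok_le_one (by omega)
      have e2 : rhok k (w (k+2)) ≤ 1 := rhok_le_one
        (by have := hmono (k+1) (k+2) (by omega); omega)
      push_cast at hb
      have := numD1 (k := k)
      linarith


lemma nle_L2_L1 (h : ∀ i, ofList (2 :: List.replicate (k+3) 1) i ≤ ofList (List.replicate (k+5) 1) i) : False := by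
  have := h (0)
  rw [eval_L2, eval_L1] at this
  split_ifs at this <;> first | omega | tauto

lemma nle_L3_L1 (h : ∀ i, ofList (3 :: List.replicate (k+2) 2) i ≤ ofList (List.replicate (k+5) 1) i) : False := by
  have := h (0)
  rw [eval_L3, eval_L1] at this
  split_ifs at this <;> first | omega | tauto

lemma nle_L4_L1 (h : ∀ i, ofList (4 :: (List.replicate (k+1) 3 ++ [1])) i ≤ ofList (List.replicate (k+5) 1) i) : False := by
  have := h (0)
  rw [eval_L4, eval_L1] at this
  split_ifs at this <;> first | omega | tauto

lemma nle_L5_L1 (h : ∀ i, ofList (6 :: (List.replicate k 5 ++ [2, 1])) i ≤ ofList (List.replicate (k+5) 1) i) : False := by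
  have := h (0)
  rw [eval_L5, eval_L1] at this
  split_ifs at this <;> first | omega | tauto

lemma nle_L1_L2 (h : ∀ i, ofList (List.replicate (k+5) 1) i ≤ ofList (2 :: List.replicate (k+3) 1) i) : False := by
  have := h (k+4)
  rw [eval_L1, eval_L2] at this
  split_ifs at this <;> first | omega | tauto

lemma nle_L3_L2 (h : ∀ i, ofList (3 :: List.replicate (k+2) 2) i ≤ ofList (2 :: List.replicate (k+3) 1) i) : False := by
  have := h (1)
  rw [eval_L3, eval_L2] at this
  split_ifs at this <;> first | omega | tauto

lemma nle_L4_L2 (h : ∀ i, ofList (4 :: (List.replicate (k+1) 3 ++ [1])) i ≤ ofList (2 :: List.replicate (k+3) 1) i) : False := by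
  have := h (1)
  rw [eval_L4, eval_L2] at this
  split_ifs at this <;> first | omega | tauto

lemma nle_L5_L2 (h : ∀ i, ofList (6 :: (List.replicate k 5 ++ [2, 1])) i ≤ ofList (2 :: List.replicate (k+3) 1) i) : False := by
  have := h (1)
  rw [eval_L5, eval_L2] at this
  split_ifs at this <;> first | omega | tauto

lemma nle_L1_L3 (h : ∀ i, ofList (List.replicate (k+5) 1) i ≤ ofList (3 :: List.replicate (k+2) 2) i) : False := by
  have := h (k+3)
  rw [eval_L1, eval_L3] at this
  split_ifs at this <;> first | omega | tauto

lemma nle_L2_L3 (h : ∀ i, ofList (2 :: List.replicate (k+3) 1) i ≤ ofList (3 :: List.replicate (k+2) 2) i) : False := by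
  have := h (k+3)
  rw [eval_L2, eval_L3] at this
  split_ifs at this <;> first | omega | tauto

lemma nle_L4_L3 (h : ∀ i, ofList (4 :: (List.replicate (k+1) 3 ++ [1])) i ≤ ofList (3 :: List.replicate (k+2) 2) i) : False := by
  have := h (0)
  rw [eval_L4, eval_L3] at this
  split_ifs at this <;> first | omega | tauto

lemma nle_L5_L3 (h : ∀ i, ofList (6 :: (List.replicate k 5 ++ [2, 1])) i ≤ ofList (3 :: List.replicate (k+2) 2) i) : False := by
  have := h (0)
  rw [eval_L5, eval_L3] at this
  split_ifs at this <;> first | omega | tauto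

lemma nle_L1_L4 (h : ∀ i, ofList (List.replicate (k+5) 1) i ≤ ofList (4 :: (List.replicate (k+1) 3 ++ [1])) i) : False := by
  have := h (k+3)
  rw [eval_L1, eval_L4] at this
  split_ifs at this <;> first | omega | tauto

lemma nle_L2_L4 (h : ∀ i, ofList (2 :: List.replicate (k+3) 1) i ≤ ofList (4 :: (List.replicate (k+1) 3 ++ [1])) i) : False := by
  have := h (k+3)
  rw [eval_L2, eval_L4] at this
  split_ifs at this <;> first | omega | tauto

lemma nle_L3_L4 (h : ∀ i, ofList (3 :: List.replicate (k+2) 2) i ≤ ofList (4 :: (List.replicate (k+1) 3 ++ [1])) i) : False := by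
  have := h (k+2)
  rw [eval_L3, eval_L4] at this
  split_ifs at this <;> first | omega | tauto

lemma nle_L5_L4 (h : ∀ i, ofList (6 :: (List.replicate k 5 ++ [2, 1])) i ≤ ofList (4 :: (List.replicate (k+1) 3 ++ [1])) i) : False := by
  have := h (0)
  rw [eval_L5, eval_L4] at this
  split_ifs at this <;> first | omega | tauto

lemma nle_L1_L5 (h : ∀ i, ofList (List.replicate (k+5) 1) i ≤ ofList (6 :: (List.replicate k 5 ++ [2, 1])) i) : False := by
  have := h (k+3)
  rw [eval_L1, eval_L5] at this
  split_ifs at this <;> first | omega | tauto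

lemma nle_L2_L5 (h : ∀ i, ofList (2 :: List.replicate (k+3) 1) i ≤ ofList (6 :: (List.replicate k 5 ++ [2, 1])) i) : False := by
  have := h (k+3)
  rw [eval_L2, eval_L5] at this
  split_ifs at this <;> first | omega | tauto

lemma nle_L3_L5 (h : ∀ i, ofList (3 :: List.replicate (k+2) 2) i ≤ ofList (6 :: (List.replicate k 5 ++ [2, 1])) i) : False := by
  have := h (k+2)
  rw [eval_L3, eval_L5] at this
  split_ifs at this <;> first | omega | tauto

lemma nle_L4_L5 (h : ∀ i, ofList (4 :: (List.replicate (k+1) 3 ++ [1])) i ≤ ofList (6 :: (List.replicate k 5 ++ [2, 1])) i) : False := by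
  have := h (k+1)
  rw [eval_L4, eval_L5] at this
  split_ifs at this <;> first | omega | tauto

lemma le_V1_L1 : ∀ i, ofList (List.replicate (k+4) 1) i ≤ ofList (List.replicate (k+5) 1) i := by
  intro i
  rw [eval_V1, eval_L1]
  split_ifs <;> omega

lemma le_V1_L2 : ∀ i, ofList (List.replicate (k+4) 1) i ≤ ofList (2 :: List.replicate (k+3) 1) i := by
  intro i
  rw [eval_V1, eval_L2]
  split_ifs <;> omega

lemma le_V2_L3 : ∀ i, ofList (List.replicate (k+3) 2) i ≤ ofList (3 :: List.replicate (k+2) 2) i := by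
  intro i
  rw [eval_V2, eval_L3]
  split_ifs <;> omega

lemma le_V4_L4 : ∀ i, ofList (List.replicate (k+2) 3 ++ [1]) i ≤ ofList (4 :: (List.replicate (k+1) 3 ++ [1])) i := by
  intro i
  rw [eval_V4, eval_L4]
  split_ifs <;> omega

lemma le_V5_L5 : ∀ i, ofList (List.replicate (k+1) 5 ++ [2, 1]) i ≤ ofList (6 :: (List.replicate k 5 ++ [2, 1])) i := by
  intro i
  rw [eval_V5, eval_L5]
  split_ifs <;> omega

end Work

/-- For every integer `k ≥ 0`, the set of minimal elements of
`{v ∈ Ṽ : ρ_k(v) > k + 4}` is exactly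
`{(1^{k+5}), (2,1^{k+3}), (3,2^{k+2}), (4,3^{k+1},1), (6,5^k,2,1)}`; consequently
every `w ∈ Ṽ` with `ρ_k(w) > k + 4` admits `v < w` with `ρ_k(v) = k + 4`,
i.e. `ρ_k` is `(k+4)`-separating. -/
theorem rhok_minimal_solutions_and_separating (k : ℕ) :
    ({w | (IsVt w ∧ rhokV k w > (k : ℝ) + 4) ∧
        ∀ v : ℕ → ℕ, IsVt v → rhokV k v > (k : ℝ) + 4 → (∀ i, v i ≤ w i) → v = w}
      = {ofList (List.replicate (k + 5) 1),
         ofList (2 :: List.replicate (k + 3) 1),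
         ofList (3 :: List.replicate (k + 2) 2),
         ofList (4 :: (List.replicate (k + 1) 3 ++ [1])),
         ofList (6 :: (List.replicate k 5 ++ [2, 1]))}) ∧
    ∀ w : ℕ → ℕ, IsVt w → rhokV k w > (k : ℝ) + 4 →
      ∃ v : ℕ → ℕ, IsVt v ∧ (∀ i, v i ≤ w i) ∧ v ≠ w ∧ rhokV k v = (k : ℝ) + 4 := by
  have hgt1 : rhokV k (ofList (List.replicate (k + 5) 1)) > (k:ℝ)+4 := by
    rw [Work.rhokV_L1]; linarith
  have hgt2 : rhokV k (ofList (2 :: List.replicate (k + 3) 1)) > (k:ℝ)+4 := by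
    rw [Work.rhokV_L2]
    have : (0:ℝ) < 1/((k:ℝ)+3) := by positivity
    linarith
  have hgt3 : rhokV k (ofList (3 :: List.replicate (k + 2) 2)) > (k:ℝ)+4 := by
    rw [Work.rhokV_L3]
    have : (0:ℝ) < 1/(((k:ℝ)+2)*((k:ℝ)+3)) := by positivity
    linarith
  have hgt4 : rhokV k (ofList (4 :: (List.replicate (k + 1) 3 ++ [1]))) > (k:ℝ)+4 := by
    rw [Work.rhokV_L4]
    have h0 : (0:ℝ) < (((k:ℝ)+2)^2+((k:ℝ)+2)-1) := by nlinarith [Work.x2le (k := k)]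
    have : (0:ℝ) < 1/(((k:ℝ)+2)*(((k:ℝ)+2)^2+((k:ℝ)+2)-1)) := by positivity
    linarith
  have hgt5 := Work.rhokV_L5 (k := k)
  constructor
  · ext w
    simp only [Set.mem_setOf_eq, Set.mem_insert_iff, Set.mem_singleton_iff]
    constructor
    · rintro ⟨⟨⟨hmono, hsupp⟩, hρ⟩, hmin⟩
      rcases Work.domination w hmono hρ with hd | hd | hd | hd | hd
      · exact Or.inl (hmin _ Work.isVt_L1 hgt1 hd).symm
      · exact Or.inr (Or.inl (hmin _ Work.isVt_L2 hgt2 hd).symm)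
      · exact Or.inr (Or.inr (Or.inl (hmin _ Work.isVt_L3 hgt3 hd).symm))
      · exact Or.inr (Or.inr (Or.inr (Or.inl (hmin _ Work.isVt_L4 hgt4 hd).symm)))
      · exact Or.inr (Or.inr (Or.inr (Or.inr ((hmin _ Work.isVt_L5 hgt5 hd).symm))))
    · intro hw
      rcases hw with rfl | rfl | rfl | rfl | rfl
      · refine ⟨⟨Work.isVt_L1, hgt1⟩, ?_⟩
        intro v hv hρv hle
        rcases Work.domination v hv.1 hρv with hd | hd | hd | hd | hd
        · exact funext fun i => le_antisymm (hle i) (hd i)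
        · exact (Work.nle_L2_L1 (fun i => le_trans (hd i) (hle i))).elim
        · exact (Work.nle_L3_L1 (fun i => le_trans (hd i) (hle i))).elim
        · exact (Work.nle_L4_L1 (fun i => le_trans (hd i) (hle i))).elim
        · exact (Work.nle_L5_L1 (fun i => le_trans (hd i) (hle i))).elim
      · refine ⟨⟨Work.isVt_L2, hgt2⟩, ?_⟩
        intro v hv hρv hle
        rcases Work.domination v hv.1 hρv with hd | hd | hd | hd | hd
        · exact (Work.nle_L1_L2 (fun i => le_trans (hd i) (hle i))).elim
        · exact funext fun i => le_antisymm (hle i) (hd i)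
        · exact (Work.nle_L3_L2 (fun i => le_trans (hd i) (hle i))).elim
        · exact (Work.nle_L4_L2 (fun i => le_trans (hd i) (hle i))).elim
        · exact (Work.nle_L5_L2 (fun i => le_trans (hd i) (hle i))).elim
      · refine ⟨⟨Work.isVt_L3, hgt3⟩, ?_⟩
        intro v hv hρv hle
        rcases Work.domination v hv.1 hρv with hd | hd | hd | hd | hd
        · exact (Work.nle_L1_L3 (fun i => le_trans (hd i) (hle i))).elim
        · exact (Work.nle_L2_L3 (fun i => le_trans (hd i) (hle i))).elim
        · exact funext fun i => le_antisymm (hle i) (hd i)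
        · exact (Work.nle_L4_L3 (fun i => le_trans (hd i) (hle i))).elim
        · exact (Work.nle_L5_L3 (fun i => le_trans (hd i) (hle i))).elim
      · refine ⟨⟨Work.isVt_L4, hgt4⟩, ?_⟩
        intro v hv hρv hle
        rcases Work.domination v hv.1 hρv with hd | hd | hd | hd | hd
        · exact (Work.nle_L1_L4 (fun i => le_trans (hd i) (hle i))).elim
        · exact (Work.nle_L2_L4 (fun i => le_trans (hd i) (hle i))).elim
        · exact (Work.nle_L3_L4 (fun i => le_trans (hd i) (hle i))).elim
        · exact funext fun i => le_antisymm (hle i) (hd i)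
        · exact (Work.nle_L5_L4 (fun i => le_trans (hd i) (hle i))).elim
      · refine ⟨⟨Work.isVt_L5, hgt5⟩, ?_⟩
        intro v hv hρv hle
        rcases Work.domination v hv.1 hρv with hd | hd | hd | hd | hd
        · exact (Work.nle_L1_L5 (fun i => le_trans (hd i) (hle i))).elim
        · exact (Work.nle_L2_L5 (fun i => le_trans (hd i) (hle i))).elim
        · exact (Work.nle_L3_L5 (fun i => le_trans (hd i) (hle i))).elim
        · exact (Work.nle_L4_L5 (fun i => le_trans (hd i) (hle i))).elim
        · exact funext fun i => le_antisymm (hle i) (hd i)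
  · intro w hw hρ
    rcases Work.domination w hw.1 hρ with hd | hd | hd | hd | hd
    · refine ⟨_, Work.isVt_V1, fun i => le_trans (Work.le_V1_L1 i) (hd i), ?_, Work.rhokV_V1⟩
      intro heq
      rw [← heq, Work.rhokV_V1] at hρ
      exact lt_irrefl _ hρ
    · refine ⟨_, Work.isVt_V1, fun i => le_trans (Work.le_V1_L2 i) (hd i), ?_, Work.rhokV_V1⟩
      intro heq
      rw [← heq, Work.rhokV_V1] at hρ
      exact lt_irrefl _ hρ
    · refine ⟨_, Work.isVt_V2, fun i => le_trans (Work.le_V2_L3 i) (hd i), ?_, Work.rhokV_V2⟩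
      intro heq
      rw [← heq, Work.rhokV_V2] at hρ
      exact lt_irrefl _ hρ
    · refine ⟨_, Work.isVt_V4, fun i => le_trans (Work.le_V4_L4 i) (hd i), ?_, Work.rhokV_V4⟩
      intro heq
      rw [← heq, Work.rhokV_V4] at hρ
      exact lt_irrefl _ hρ
    · refine ⟨_, Work.isVt_V5, fun i => le_trans (Work.le_V5_L5 i) (hd i), ?_, Work.rhokV_V5⟩
      intro heq
      rw [← heq, Work.rhokV_V5] at hρ
      exact lt_irrefl _ hρ
end

section
/- Let α be a positive rational number, and for real α define the sequence u₀(α) = 0, u₁(α) = 1, u_{n+2}(α) = (α+2)·u_{n+1}(α) − u_n(α) (one has u_n(α) > 0 for all n ≥ 1 since α > 0), and ρ_α(n) = 1 + u_{n−1}(α)/(u_n(α) + 1) for integers n ≥ 1. If there exist positive integers v₁, …, v_s (s ≥ 1) with Σ_{i=1}^{s} ρ_α(v_i) = α + 4, then α is an integer. -/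
private def Wseq (α : ℚ) : ℕ → ℚ
  | 0 => 0
  | 1 => 1
  | (n+2) => (α + 2) * Wseq α (n+1) - Wseq α n

private lemma Wseq_norm (α : ℚ) (ℓ : ℕ) [Fact ℓ.Prime]
    (ht : 1 < padicNorm ℓ α) :
    ∀ n : ℕ, padicNorm ℓ (Wseq α (n+1)) = (padicNorm ℓ α) ^ n := by
  have h2 : padicNorm ℓ (α + 2) = padicNorm ℓ α := by
    have hne : padicNorm ℓ α ≠ padicNorm ℓ (2 : ℚ) := by
      have : padicNorm ℓ ((2 : ℤ) : ℚ) ≤ 1 := padicNorm.of_int 2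
      push_cast at this
      exact ne_of_gt (lt_of_le_of_lt this ht)
    have := padicNorm.add_eq_max_of_ne (p := ℓ) hne
    rw [this, max_eq_left]
    have : padicNorm ℓ ((2 : ℤ) : ℚ) ≤ 1 := padicNorm.of_int 2
    push_cast at this
    exact this.trans ht.le
  intro n
  induction n using Nat.twoStepInduction with
  | zero => simp [Wseq]
  | one =>
    show padicNorm ℓ ((α + 2) * Wseq α 1 - Wseq α 0) = _
    simp [Wseq, h2]
  | more n ih1 ih2 =>
    show padicNorm ℓ ((α + 2) * Wseq α (n+2) - Wseq α (n+1)) = _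
    rw [sub_eq_add_neg, padicNorm.add_eq_max_of_ne, padicNorm.mul, h2, ih2,
      padicNorm.neg, ih1]
    · rw [max_eq_left, ← pow_succ']
      rw [← pow_succ']
      exact pow_le_pow_right₀ ht.le (by omega)
    · rw [padicNorm.mul, h2, ih2, padicNorm.neg, ih1, ← pow_succ']
      exact ne_of_gt (pow_lt_pow_right₀ ht (by omega))

/-- Let `α` be a positive rational and define `u₀(α) = 0`,
`u₁(α) = 1`, `u_{n+2}(α) = (α+2)·u_{n+1}(α) − u_n(α)` and
`ρ_α(n) = 1 + u_{n−1}(α)/(u_n(α) + 1)` for `n ≥ 1`.  If there are positive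
integers `v₁, …, v_s` (`s ≥ 1`) with `Σ_{i=1}^s ρ_α(v_i) = α + 4`, then `α` is an
integer. -/
theorem rho_alpha_equation_integer (α : ℚ) (hα : 0 < α)
    (u : ℕ → ℝ) (hu0 : u 0 = 0) (hu1 : u 1 = 1)
    (hrec : ∀ n : ℕ, u (n + 2) = ((α : ℝ) + 2) * u (n + 1) - u n)
    (s : ℕ) (hs : 1 ≤ s) (v : Fin s → ℕ) (hv : ∀ i, 1 ≤ v i)
    (heq : ∑ i, (1 + u (v i - 1) / (u (v i) + 1)) = (α : ℝ) + 4) :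
    ∃ m : ℤ, α = m := by
  -- u agrees with the rational sequence Wseq
  have hW : ∀ n, u n = ((Wseq α n : ℚ) : ℝ) := by
    intro n
    induction n using Nat.twoStepInduction with
    | zero => simp [Wseq, hu0]
    | one => simp [Wseq, hu1]
    | more n ih1 ih2 =>
      rw [hrec n, ih1, ih2]
      show _ = ((((α + 2) * Wseq α (n+1) - Wseq α n : ℚ)) : ℝ)
      push_cast
      ring
  -- rational version of the equation
  have heqQ : (∑ i, (Wseq α (v i - 1) / (Wseq α (v i) + 1)) : ℚ) = α + 4 - s := by
    have : ((∑ i, (1 + Wseq α (v i - 1) / (Wseq α (v i) + 1)) : ℚ) : ℝ)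
        = ((α + 4 : ℚ) : ℝ) := by
      push_cast
      rw [← heq]
      refine Finset.sum_congr rfl fun i _ => ?_
      rw [hW (v i - 1), hW (v i)]
      try push_cast
      try ring
    have h2 : (∑ i, (1 + Wseq α (v i - 1) / (Wseq α (v i) + 1)) : ℚ) = α + 4 :=
      by exact_mod_cast this
    rw [Finset.sum_add_distrib, Finset.sum_const, Finset.card_univ,
      Fintype.card_fin] at h2
    simp only [nsmul_eq_mul, mul_one] at h2
    linarith
  -- show the denominator is 1
  by_contra hcon
  have hden : α.den ≠ 1 := by
    intro h
    exact hcon ⟨α.num, by rw [← Rat.num_div_den α, h]; simp⟩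
  set ℓ := α.den.minFac with hℓ
  have hprime : ℓ.Prime := Nat.minFac_prime hden
  haveI : Fact ℓ.Prime := ⟨hprime⟩
  have hdvd : ℓ ∣ α.den := Nat.minFac_dvd _
  -- padicNorm ℓ α > 1
  have hαne : α ≠ 0 := ne_of_gt hα
  have hval : padicValRat ℓ α < 0 := by
    rw [padicValRat]
    have h1 : padicValInt ℓ α.num = 0 := by
      apply padicValInt.eq_zero_of_not_dvd
      intro hd
      have : (ℓ : ℤ) ∣ (α.den : ℤ) := Int.natCast_dvd_natCast.mpr hdvd
      have hln : ℓ ∣ α.num.natAbs := Int.natCast_dvd_natCast.mp (by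
        rwa [Int.dvd_natAbs])
      have h1 := Nat.dvd_gcd hln hdvd
      rw [α.reduced] at h1
      exact hprime.one_lt.ne' (Nat.eq_one_of_dvd_one h1)
    have h2 : 1 ≤ padicValNat ℓ α.den :=
      one_le_padicValNat_of_dvd α.pos.ne' hdvd
    omega
  have htn : 1 < padicNorm ℓ α := by
    rw [padicNorm.eq_zpow_of_nonzero hαne]
    have : (0 : ℤ) < -padicValRat ℓ α := by omega
    calc (1 : ℚ) = (ℓ : ℚ) ^ (0 : ℤ) := by simp
    _ < (ℓ : ℚ) ^ (-padicValRat ℓ α) := by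
        apply zpow_lt_zpow_right₀ _ this
        exact_mod_cast hprime.one_lt
  set t := padicNorm ℓ α with htdef
  -- norm of each summand is ≤ 1/t
  have hterm : ∀ i : Fin s,
      padicNorm ℓ (Wseq α (v i - 1) / (Wseq α (v i) + 1)) ≤ 1 / t := by
    intro i
    rcases Nat.exists_eq_add_of_le (hv i) with ⟨k, hk⟩
    rcases k with _ | m
    · -- v i = 1
      have : v i = 1 := by omega
      rw [this]
      simp [Wseq]
      positivity
    · -- v i = m + 2
      have hvi : v i = m + 2 := by omega
      rw [hvi]
      have hnum : padicNorm ℓ (Wseq α (m + 2 - 1)) = t ^ m := by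
        show padicNorm ℓ (Wseq α (m + 1)) = t ^ m
        exact Wseq_norm α ℓ htn m
      have hden1 : padicNorm ℓ (Wseq α (m + 2) + 1) = t ^ (m + 1) := by
        rw [padicNorm.add_eq_max_of_ne, Wseq_norm α ℓ htn (m+1), padicNorm.one,
          max_eq_left (one_le_pow₀ htn.le)]
        rw [Wseq_norm α ℓ htn (m+1), padicNorm.one]
        exact ne_of_gt (one_lt_pow₀ htn (by omega))
      rw [padicNorm.div, hnum, hden1, pow_succ]
      rw [div_le_div_iff₀ (by positivity) (by positivity)]
      ring_nf
      exact le_rfl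
  have htpos : 0 < t := lt_trans one_pos htn
  -- norm of the sum
  have hsum : padicNorm ℓ (α + 4 - s) ≤ 1 / t := by
    rw [← heqQ]
    exact padicNorm.sum_le' (fun i _ => hterm i) (by positivity)
  -- but the norm of α + 4 - s equals t > 1 > 1/t
  have hR : padicNorm ℓ (α + 4 - s) = t := by
    have : α + 4 - s = α + ((4 - s : ℤ) : ℚ) := by push_cast; ring
    rw [this, padicNorm.add_eq_max_of_ne, max_eq_left]
    · exact (padicNorm.of_int _).trans htn.le
    · exact ne_of_gt (lt_of_le_of_lt (padicNorm.of_int _) htn)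
  rw [hR] at hsum
  have : t * t ≤ 1 := by
    rw [le_div_iff₀ htpos] at hsum
    linarith
  nlinarith
end
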